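/- Fix τ > 0 and constant step size δ > 0, and run the SVT iteration starting from Y⁰ = 0: X^k = D_τ(Y^{k−1}), Y^k = Y^{k−1} + δ P_Ω(M − X^k). Let k₀ be the integer with τ/(δ‖P_Ω(M)‖₂) ∈ (k₀−1, k₀], where ‖·‖₂ is the spectral norm. Then for all k = 1, …, k₀ one has X^k = 0 and Y^k = kδ · P_Ω(M). -/

import Mathlib

open Matrix Filter Topology

noncomputable def frob {n₁ n₂ : ℕ} (X : Matrix (Fin n₁) (Fin n₂) ℝ) : ℝ :=
  Real.sqrt (∑ i, ∑ j, (X i j) ^ 2)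

noncomputable def mInner {n₁ n₂ : ℕ} (X Y : Matrix (Fin n₁) (Fin n₂) ℝ) : ℝ :=
  ∑ i, ∑ j, X i j * Y i j

noncomputable def singVal {n₁ n₂ : ℕ} (X : Matrix (Fin n₁) (Fin n₂) ℝ) (j : Fin n₂) : ℝ :=
  Real.sqrt ((show (Xᵀ * X).IsHermitian by
    rw [← Matrix.conjTranspose_eq_transpose_of_trivial]
    exact Matrix.isHermitian_conjTranspose_mul_self X).eigenvalues j)

noncomputable def nuclearNorm {n₁ n₂ : ℕ} (X : Matrix (Fin n₁) (Fin n₂) ℝ) : ℝ :=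
  ∑ j, singVal X j

noncomputable def specNorm {n₁ n₂ : ℕ} (X : Matrix (Fin n₁) (Fin n₂) ℝ) : ℝ :=
  ⨆ j, singVal X j

noncomputable def ftau {n₁ n₂ : ℕ} (τ : ℝ) (X : Matrix (Fin n₁) (Fin n₂) ℝ) : ℝ :=
  τ * nuclearNorm X + (1 / 2) * frob X ^ 2

def projSet {n₁ n₂ : ℕ} (Ω : Finset (Fin n₁ × Fin n₂)) (X : Matrix (Fin n₁) (Fin n₂) ℝ) :
    Matrix (Fin n₁) (Fin n₂) ℝ :=
  Matrix.of fun i j => if (i, j) ∈ Ω then X i j else 0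

def IsSubgradAt {n₁ n₂ : ℕ} (f : Matrix (Fin n₁) (Fin n₂) ℝ → ℝ)
    (Z X₀ : Matrix (Fin n₁) (Fin n₂) ℝ) : Prop :=
  ∀ X, f X₀ + mInner Z (X - X₀) ≤ f X

noncomputable def eNorm {m : ℕ} (v : Fin m → ℝ) : ℝ := Real.sqrt (∑ i, v i ^ 2)

noncomputable def eInner {m : ℕ} (v w : Fin m → ℝ) : ℝ := ∑ i, v i * w i

section Aux

variable {n₁ n₂ m n : ℕ}

lemma dot_self_eq_sum_sq {m : ℕ} (v : Fin m → ℝ) : v ⬝ᵥ v = ∑ i, v i ^ 2 := by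
  simp [dotProduct, pow_two]

lemma dot_conjTranspose_mulVec (A : Matrix (Fin m) (Fin n) ℝ)
    (a : Fin n → ℝ) (b : Fin m → ℝ) : a ⬝ᵥ (Aᴴ *ᵥ b) = (A *ᵥ a) ⬝ᵥ b := by
  rw [dotProduct_mulVec, vecMul_conjTranspose]
  simp

lemma basis_dot_self (X : Matrix (Fin n₁) (Fin n₂) ℝ) (j : Fin n₂) :
    (⇑((Matrix.isHermitian_conjTranspose_mul_self X).eigenvectorBasis j) : Fin n₂ → ℝ) ⬝ᵥ
      ⇑((Matrix.isHermitian_conjTranspose_mul_self X).eigenvectorBasis j) = 1 := by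
  have h := ((Matrix.isHermitian_conjTranspose_mul_self X).eigenvectorBasis).orthonormal.1 j
  rw [EuclideanSpace.norm_eq] at h
  have h2 := Real.sqrt_eq_one.mp h
  rw [dot_self_eq_sum_sq]
  rw [← h2]
  congr 1
  ext i
  simp [Real.norm_eq_abs, sq_abs]

lemma mulVec_basis_dot (X : Matrix (Fin n₁) (Fin n₂) ℝ) (j : Fin n₂) :
    (X *ᵥ ⇑((Matrix.isHermitian_conjTranspose_mul_self X).eigenvectorBasis j)) ⬝ᵥ
      (X *ᵥ ⇑((Matrix.isHermitian_conjTranspose_mul_self X).eigenvectorBasis j)) =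
      (Matrix.isHermitian_conjTranspose_mul_self X).eigenvalues j := by
  set hH := Matrix.isHermitian_conjTranspose_mul_self X
  set v := ⇑(hH.eigenvectorBasis j)
  have h1 : (Xᴴ * X) *ᵥ v = hH.eigenvalues j • v := hH.mulVec_eigenvectorBasis j
  have h2 : v ⬝ᵥ ((Xᴴ * X) *ᵥ v) = (X *ᵥ v) ⬝ᵥ (X *ᵥ v) := by
    rw [← Matrix.mulVec_mulVec, dot_conjTranspose_mulVec]
  rw [← h2, h1]
  rw [dotProduct_smul, basis_dot_self]
  simp

lemma singVal_nonneg (X : Matrix (Fin n₁) (Fin n₂) ℝ) (j : Fin n₂) : 0 ≤ singVal X j :=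
  Real.sqrt_nonneg _

lemma nuclearNorm_nonneg (X : Matrix (Fin n₁) (Fin n₂) ℝ) : 0 ≤ nuclearNorm X :=
  Finset.sum_nonneg fun j _ => singVal_nonneg X j

lemma singVal_le_specNorm (X : Matrix (Fin n₁) (Fin n₂) ℝ) (j : Fin n₂) :
    singVal X j ≤ specNorm X :=
  le_ciSup (Set.Finite.bddAbove (Set.finite_range _)) j

lemma specNorm_nonneg (X : Matrix (Fin n₁) (Fin n₂) ℝ) : 0 ≤ specNorm X :=
  Real.iSup_nonneg (singVal_nonneg X)

lemma nuclearNorm_zero : nuclearNorm (0 : Matrix (Fin n₁) (Fin n₂) ℝ) = 0 := by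
  rw [nuclearNorm]
  apply Finset.sum_eq_zero
  intro j _
  have h := mulVec_basis_dot (0 : Matrix (Fin n₁) (Fin n₂) ℝ) j
  simp only [Matrix.zero_mulVec, zero_dotProduct] at h
  rw [singVal]
  have h' : _ = (0:ℝ) := h.symm
  exact (congrArg Real.sqrt h').trans Real.sqrt_zero

/-- operator norm bound: `‖Y w‖² ≤ specNorm Y ^ 2 * ‖w‖²`. -/
lemma opBound (Y : Matrix (Fin n₁) (Fin n₂) ℝ) (w : Fin n₂ → ℝ) :
    (Y *ᵥ w) ⬝ᵥ (Y *ᵥ w) ≤ specNorm Y ^ 2 * (w ⬝ᵥ w) := by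
  set hH := Matrix.isHermitian_conjTranspose_mul_self Y with hHdef
  set V : Matrix (Fin n₂) (Fin n₂) ℝ := (hH.eigenvectorUnitary : Matrix (Fin n₂) (Fin n₂) ℝ)
    with hVdef
  have hmem : V ∈ Matrix.unitaryGroup (Fin n₂) ℝ := (hH.eigenvectorUnitary).2
  have hVV' : V * Vᴴ = 1 := by
    have := (Matrix.mem_unitaryGroup_iff).mp hmem
    exact this
  set u : Fin n₂ → ℝ := Vᴴ *ᵥ w with hu
  have h1 : V *ᵥ u = w := by
    rw [hu, Matrix.mulVec_mulVec, hVV', Matrix.one_mulVec]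
  have hdot : ∀ z : Fin n₂ → ℝ, w ⬝ᵥ (V *ᵥ z) = u ⬝ᵥ z := by
    intro z
    have := dot_conjTranspose_mulVec Vᴴ w z
    rw [Matrix.conjTranspose_conjTranspose] at this
    exact this
  have huu : u ⬝ᵥ u = w ⬝ᵥ w := by
    have h2 := dot_conjTranspose_mulVec V u w
    rw [h1] at h2
    exact h2
  have hspec : Yᴴ * Y = V * Matrix.diagonal (hH.eigenvalues) * Vᴴ := by
    have := hH.spectral_theorem
    rw [hVdef]
    simpa [Matrix.star_eq_conjTranspose] using this
  have hLHS : (Y *ᵥ w) ⬝ᵥ (Y *ᵥ w) = ∑ j, hH.eigenvalues j * u j ^ 2 := by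
    have e1 : (Y *ᵥ w) ⬝ᵥ (Y *ᵥ w) = w ⬝ᵥ ((Yᴴ * Y) *ᵥ w) := by
      rw [← Matrix.mulVec_mulVec, dot_conjTranspose_mulVec]
    have hmv := congrArg (fun A : Matrix (Fin n₂) (Fin n₂) ℝ => A *ᵥ w) hspec
    rw [e1, hmv]
    rw [← Matrix.mulVec_mulVec, ← Matrix.mulVec_mulVec, hdot]
    rw [dotProduct]
    refine Finset.sum_congr rfl fun j _ => ?_
    rw [Matrix.mulVec_diagonal]
    ring
  rw [hLHS, ← huu, dot_self_eq_sum_sq, Finset.mul_sum]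
  apply Finset.sum_le_sum
  intro j _
  have hev : 0 ≤ hH.eigenvalues j := Matrix.eigenvalues_conjTranspose_mul_self_nonneg Y j
  have h3 : hH.eigenvalues j ≤ specNorm Y ^ 2 := by
    have h4 : singVal Y j ≤ specNorm Y := singVal_le_specNorm Y j
    have h5 : singVal Y j ^ 2 = hH.eigenvalues j := Real.sq_sqrt hev
    nlinarith [singVal_nonneg Y j]
  nlinarith [sq_nonneg (u j)]

lemma trace_conjTranspose_mul (A B : Matrix (Fin m) (Fin n) ℝ) :
    Matrix.trace (Aᴴ * B) = ∑ i, ∑ j, A i j * B i j := by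
  rw [Matrix.trace]
  simp only [Matrix.diag_apply, Matrix.mul_apply, Matrix.conjTranspose_apply, star_trivial]
  exact Finset.sum_comm

/-- von Neumann-type duality: `⟨X, Y⟩ ≤ ‖Y‖₂ ‖X‖₊`. -/
lemma mInner_le_specNorm_mul_nuclearNorm (X Y : Matrix (Fin n₁) (Fin n₂) ℝ) :
    mInner X Y ≤ specNorm Y * nuclearNorm X := by
  set hH := Matrix.isHermitian_conjTranspose_mul_self X with hHdef
  set V : Matrix (Fin n₂) (Fin n₂) ℝ := (hH.eigenvectorUnitary : Matrix (Fin n₂) (Fin n₂) ℝ)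
    with hVdef
  have hmem : V ∈ Matrix.unitaryGroup (Fin n₂) ℝ := (hH.eigenvectorUnitary).2
  have hVV' : V * Vᴴ = 1 := by
    have := (Matrix.mem_unitaryGroup_iff).mp hmem
    exact this
  have hcol : ∀ (A : Matrix (Fin n₁) (Fin n₂) ℝ) (i : Fin n₁) (j : Fin n₂),
      (A * V) i j = (A *ᵥ ⇑(hH.eigenvectorBasis j)) i := by
    intro A i j
    rw [Matrix.mul_apply, Matrix.mulVec, dotProduct]
    refine Finset.sum_congr rfl fun a _ => ?_
    rw [hVdef, Matrix.IsHermitian.eigenvectorUnitary_apply]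
  have e1 : ∑ j, (X *ᵥ ⇑(hH.eigenvectorBasis j)) ⬝ᵥ (Y *ᵥ ⇑(hH.eigenvectorBasis j)) =
      Matrix.trace ((X * V)ᴴ * (Y * V)) := by
    rw [trace_conjTranspose_mul]
    rw [Finset.sum_comm]
    refine Finset.sum_congr rfl fun j _ => ?_
    rw [dotProduct]
    refine Finset.sum_congr rfl fun i _ => ?_
    rw [hcol X i j, hcol Y i j]
  have e2 : Matrix.trace ((X * V)ᴴ * (Y * V)) = Matrix.trace (Xᴴ * Y) := by
    rw [Matrix.conjTranspose_mul]
    calc Matrix.trace (Vᴴ * Xᴴ * (Y * V)) = Matrix.trace ((Vᴴ * (Xᴴ * Y)) * V) := by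
          simp only [Matrix.mul_assoc]
      _ = Matrix.trace (V * (Vᴴ * (Xᴴ * Y))) := Matrix.trace_mul_comm _ _
      _ = Matrix.trace ((V * Vᴴ) * (Xᴴ * Y)) := by rw [← Matrix.mul_assoc]
      _ = Matrix.trace (Xᴴ * Y) := by rw [hVV', one_mul]
  have hstep : mInner X Y =
      ∑ j, (X *ᵥ ⇑(hH.eigenvectorBasis j)) ⬝ᵥ (Y *ᵥ ⇑(hH.eigenvectorBasis j)) := by
    rw [e1, e2, mInner, ← trace_conjTranspose_mul X Y]
  rw [hstep, nuclearNorm, Finset.mul_sum]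
  apply Finset.sum_le_sum
  intro j _
  set v := ⇑(hH.eigenvectorBasis j)
  have hCS : (X *ᵥ v) ⬝ᵥ (Y *ᵥ v) ≤
      Real.sqrt ((X *ᵥ v) ⬝ᵥ (X *ᵥ v)) * Real.sqrt ((Y *ᵥ v) ⬝ᵥ (Y *ᵥ v)) := by
    rw [dotProduct, dot_self_eq_sum_sq, dot_self_eq_sum_sq]
    exact Real.sum_mul_le_sqrt_mul_sqrt _ _ _
  have hX : Real.sqrt ((X *ᵥ v) ⬝ᵥ (X *ᵥ v)) = singVal X j := by
    rw [mulVec_basis_dot, singVal]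
    rfl
  have hYb : Real.sqrt ((Y *ᵥ v) ⬝ᵥ (Y *ᵥ v)) ≤ specNorm Y := by
    have h1 : (Y *ᵥ v) ⬝ᵥ (Y *ᵥ v) ≤ specNorm Y ^ 2 * (v ⬝ᵥ v) := opBound Y v
    rw [basis_dot_self, mul_one] at h1
    calc Real.sqrt ((Y *ᵥ v) ⬝ᵥ (Y *ᵥ v)) ≤ Real.sqrt (specNorm Y ^ 2) :=
          Real.sqrt_le_sqrt h1
      _ = specNorm Y := by rw [Real.sqrt_sq (specNorm_nonneg Y)]
  calc (X *ᵥ v) ⬝ᵥ (Y *ᵥ v) ≤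
        Real.sqrt ((X *ᵥ v) ⬝ᵥ (X *ᵥ v)) * Real.sqrt ((Y *ᵥ v) ⬝ᵥ (Y *ᵥ v)) := hCS
    _ ≤ singVal X j * specNorm Y := by
        rw [hX]
        exact mul_le_mul_of_nonneg_left hYb (singVal_nonneg X j)
    _ = specNorm Y * singVal X j := mul_comm _ _



lemma frob_sq (A : Matrix (Fin n₁) (Fin n₂) ℝ) : frob A ^ 2 = ∑ i, ∑ j, A i j ^ 2 :=
  Real.sq_sqrt (Finset.sum_nonneg fun i _ => Finset.sum_nonneg fun j _ => sq_nonneg _)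

lemma frob_sub_sq (A B : Matrix (Fin n₁) (Fin n₂) ℝ) :
    frob (A - B) ^ 2 = frob A ^ 2 - 2 * mInner A B + frob B ^ 2 := by
  rw [frob_sq, frob_sq, frob_sq, mInner]
  have h : ∀ i j, ((A - B) i j) ^ 2 = A i j ^ 2 - 2 * (A i j * B i j) + B i j ^ 2 := by
    intro i j; rw [Matrix.sub_apply]; ring
  calc ∑ i, ∑ j, ((A - B) i j) ^ 2
      = ∑ i, ∑ j, (A i j ^ 2 - 2 * (A i j * B i j) + B i j ^ 2) :=
        Finset.sum_congr rfl fun i _ => Finset.sum_congr rfl fun j _ => h i j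
    _ = ∑ i, (∑ j, A i j ^ 2 - 2 * ∑ j, (A i j * B i j) + ∑ j, B i j ^ 2) := by
        refine Finset.sum_congr rfl fun i _ => ?_
        rw [Finset.sum_add_distrib, Finset.sum_sub_distrib, Finset.mul_sum]
    _ = _ := by
        rw [Finset.sum_add_distrib, Finset.sum_sub_distrib, Finset.mul_sum]

lemma frob_neg (A : Matrix (Fin n₁) (Fin n₂) ℝ) : frob (-A) = frob A := by
  simp [frob, neg_sq]

lemma mInner_smul_right (c : ℝ) (A B : Matrix (Fin n₁) (Fin n₂) ℝ) :
    mInner A (c • B) = c * mInner A B := by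
  simp [mInner, Finset.mul_sum, mul_left_comm]

lemma matrix_eq_zero_of_frob_sq (A : Matrix (Fin n₁) (Fin n₂) ℝ) (h : frob A ^ 2 ≤ 0) :
    A = 0 := by
  rw [frob_sq] at h
  have h2 : ∑ i, ∑ j, A i j ^ 2 = 0 :=
    le_antisymm h (Finset.sum_nonneg fun i _ => Finset.sum_nonneg fun j _ => sq_nonneg _)
  ext i j
  have h3 := (Finset.sum_eq_zero_iff_of_nonneg
    (fun i _ => Finset.sum_nonneg fun j _ => sq_nonneg (A i j))).mp h2 i (Finset.mem_univ i)
  have h4 := (Finset.sum_eq_zero_iff_of_nonneg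
    (fun j _ => sq_nonneg (A i j))).mp h3 j (Finset.mem_univ j)
  simpa using pow_eq_zero_iff (n := 2) (by norm_num) |>.mp h4


end Aux

/-- With constant step size `δ > 0` and `Y⁰ = 0`, if `k₀` is the integer with
`τ/(δ‖P_Ω(M)‖₂) ∈ (k₀ - 1, k₀]`, then for all `1 ≤ k ≤ k₀` one has `X^k = 0` and
`Y^k = kδ·P_Ω(M)`. Here `X^{k}` is characterized as the prox minimizer, i.e.
`X^k = D_τ(Y^{k-1})`. -/
theorem initial_steps (n₁ n₂ : ℕ) (τ δ : ℝ) (hτ : 0 < τ) (hδ : 0 < δ)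
    (Ω : Finset (Fin n₁ × Fin n₂)) (M : Matrix (Fin n₁) (Fin n₂) ℝ)
    (hM : 0 < specNorm (projSet Ω M))
    (X Y : ℕ → Matrix (Fin n₁) (Fin n₂) ℝ)
    (hY0 : Y 0 = 0)
    (hX : ∀ k, IsMinOn (fun Z => τ * nuclearNorm Z + (1 / 2) * frob (Z - Y k) ^ 2)
        Set.univ (X (k + 1)))
    (hY : ∀ k, Y (k + 1) = Y k + δ • projSet Ω (M - X (k + 1)))
    (k₀ : ℕ)
    (hk₀ : (k₀ : ℝ) - 1 < τ / (δ * specNorm (projSet Ω M)) ∧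
      τ / (δ * specNorm (projSet Ω M)) ≤ (k₀ : ℝ)) :
    ∀ k : ℕ, 1 ≤ k → k ≤ k₀ →
      X k = 0 ∧ Y k = ((k : ℝ) * δ) • projSet Ω M := by
  set P := projSet Ω M with hPdef
  have hbound : ∀ n : ℕ, n + 1 ≤ k₀ → (n : ℝ) * δ * specNorm P ≤ τ := by
    intro n h
    have h1 : (n : ℝ) + 1 ≤ (k₀ : ℝ) := by exact_mod_cast h
    have h2 : (n : ℝ) < τ / (δ * specNorm P) := lt_of_le_of_lt (by linarith) hk₀.1
    have h3 : 0 < δ * specNorm P := by positivity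
    rw [lt_div_iff₀ h3] at h2
    nlinarith
  have key : ∀ k : ℕ, (k : ℝ) * δ * specNorm P ≤ τ → Y k = ((k : ℝ) * δ) • P →
      X (k + 1) = 0 := by
    intro k hk hYk
    have hmin : τ * nuclearNorm (X (k + 1)) + (1 / 2) * frob (X (k + 1) - Y k) ^ 2 ≤
        τ * nuclearNorm (0 : Matrix (Fin n₁) (Fin n₂) ℝ) +
          (1 / 2) * frob ((0 : Matrix (Fin n₁) (Fin n₂) ℝ) - Y k) ^ 2 :=
      isMinOn_iff.mp (hX k) 0 (Set.mem_univ 0)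
    rw [nuclearNorm_zero, mul_zero, zero_add, zero_sub, frob_neg] at hmin
    rw [frob_sub_sq] at hmin
    have hIn : mInner (X (k + 1)) (Y k) ≤ τ * nuclearNorm (X (k + 1)) := by
      rw [hYk, mInner_smul_right]
      have hd := mInner_le_specNorm_mul_nuclearNorm (X (k + 1)) P
      have hN := nuclearNorm_nonneg (X (k + 1))
      have hkd : (0 : ℝ) ≤ (k : ℝ) * δ := by positivity
      have hsP : 0 ≤ specNorm P := specNorm_nonneg P
      nlinarith
    have hNn := nuclearNorm_nonneg (X (k + 1))
    have hfz : frob (X (k + 1)) ^ 2 ≤ 0 := by nlinarith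
    exact matrix_eq_zero_of_frob_sq _ hfz
  have main : ∀ k : ℕ, k ≤ k₀ → Y k = ((k : ℝ) * δ) • P := by
    intro k
    induction k with
    | zero => intro _; simp [hY0]
    | succ n ih =>
      intro h
      have hYn := ih (Nat.le_of_succ_le h)
      have hXn := key n (hbound n h) hYn
      rw [hY n, hYn, hXn, sub_zero, ← hPdef]
      push_cast
      rw [← add_smul]
      congr 1
      ring
  intro k h1 h2
  refine ⟨?_, main k h2⟩
  obtain ⟨m, rfl⟩ : ∃ m, k = m + 1 := ⟨k - 1, (Nat.succ_pred_eq_of_pos h1).symm⟩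
  exact key m (hbound m h2) (main m (Nat.le_of_succ_le h2))
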